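/- Consider the pursuit–evasion game on the corner-obstacle region X (θ₀ ∈ (0, π/2)) with speed ratio α > 1, zero capture radius, and initial positions x_p0 ≠ x_e0 in X. Define the evader's reachable region R_e as the set of x ∈ X such that there exists an admissible evader control u_e with the property that for every admissible pursuer control u_p there is a time t ∈ [0, t_f(u_p, u_e)) with x_e(t) = x. Then R_e equals the evader's initial dominance region D(x_p0, x_e0) = {x ∈ X : d_L(x, x_p0) − α·d_L(x, x_e0) > 0}. -/

import Mathlib

open MeasureTheory
open scoped ENNReal RealInnerProductSpace

noncomputable section

/-- The Euclidean plane. -/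
abbrev Pt := EuclideanSpace ℝ (Fin 2)

/-- The corner-obstacle game region
`X = {(ρ cos θ, ρ sin θ) : ρ ≥ 0, θ ∈ [θ₀, 2π − θ₀]}`, the complement of an open wedge of
half-angle `θ₀` around the positive x-axis with vertex at the origin. -/
def gameRegion (θ₀ : ℝ) : Set Pt :=
  {x | ∃ ρ θ : ℝ, 0 ≤ ρ ∧ θ ∈ Set.Icc θ₀ (2 * Real.pi - θ₀) ∧
    x = (WithLp.equiv 2 (Fin 2 → ℝ)).symm ![ρ * Real.cos θ, ρ * Real.sin θ]}

open Classical in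
/-- The shortest-path distance on the corner-obstacle region: the Euclidean distance if the
segment joining the two points stays in the region, and the length of the two-segment path
through the origin (the obstacle's vertex) otherwise. -/
def dL (θ₀ : ℝ) (x₁ x₂ : Pt) : ℝ :=
  if segment ℝ x₁ x₂ ⊆ gameRegion θ₀ then ‖x₁ - x₂‖ else ‖x₁‖ + ‖x₂‖

/-- A function is piecewise continuous if on every compact interval it is continuous
except at finitely many points. -/
def PiecewiseContinuous (u : ℝ → Pt) : Prop :=
  ∀ a b : ℝ, ∃ s : Finset ℝ, ∀ t ∈ Set.Icc a b, t ∉ s → ContinuousAt u t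

/-- A control: a piecewise continuous function with `‖u t‖ = 1` for all `t ≥ 0`. -/
def IsControl (u : ℝ → Pt) : Prop :=
  PiecewiseContinuous u ∧ ∀ t : ℝ, 0 ≤ t → ‖u t‖ = 1

/-- The trajectory from `x₀` at speed `v` under control `u`:
`x(t) = x₀ + v·∫₀ᵗ u(s) ds`. -/
def traj (x₀ : Pt) (v : ℝ) (u : ℝ → Pt) (t : ℝ) : Pt :=
  x₀ + v • ∫ s in (0:ℝ)..t, u s

/-- A control admissible from `x₀` at speed `v` in the corner-obstacle region: a control
whose trajectory stays in the region for all `t ≥ 0`. -/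
def Admissible (θ₀ : ℝ) (x₀ : Pt) (v : ℝ) (u : ℝ → Pt) : Prop :=
  IsControl u ∧ ∀ t : ℝ, 0 ≤ t → traj x₀ v u t ∈ gameRegion θ₀

/-- Capture time with capture radius `l`: `inf {t ≥ 0 : ‖x_p(t) − x_e(t)‖ ≤ l}`,
with `inf ∅ = +∞` (valued in `ℝ≥0∞`). -/
def captureTime (l : ℝ) (xp xe : ℝ → Pt) : ℝ≥0∞ :=
  ⨅ t ∈ {t : ℝ | 0 ≤ t ∧ ‖xp t - xe t‖ ≤ l}, ENNReal.ofReal t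

/-- A strategy `δ` is non-anticipative if, for every `t' > 0`, whenever two evader controls
agree almost everywhere on `[0, t']`, the corresponding pursuer controls agree almost
everywhere on `[0, t']`. -/
def Nonanticipative (δ : (ℝ → Pt) → (ℝ → Pt)) : Prop :=
  ∀ t' : ℝ, 0 < t' → ∀ u u' : ℝ → Pt,
    (∀ᵐ t ∂(volume.restrict (Set.Icc (0:ℝ) t')), u t = u' t) →
    (∀ᵐ t ∂(volume.restrict (Set.Icc (0:ℝ) t')), δ u t = δ u' t)

/-- Cauchy–Schwarz in coordinates. -/
lemma cs2 (x0 x1 y0 y1 : ℝ) :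
    x0*y0 + x1*y1 ≤ Real.sqrt (x0^2+x1^2) * Real.sqrt (y0^2+y1^2) := by
  have hX : (0:ℝ) ≤ x0^2+x1^2 := by positivity
  have hY : (0:ℝ) ≤ y0^2+y1^2 := by positivity
  have h1 : Real.sqrt (x0^2+x1^2) ^ 2 = x0^2+x1^2 := Real.sq_sqrt hX
  have h2 : Real.sqrt (y0^2+y1^2) ^ 2 = y0^2+y1^2 := Real.sq_sqrt hY
  have h3 : 0 ≤ Real.sqrt (x0^2+x1^2) := Real.sqrt_nonneg _
  have h4 : 0 ≤ Real.sqrt (y0^2+y1^2) := Real.sqrt_nonneg _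
  nlinarith [sq_nonneg (x0*y1 - x1*y0), sq_nonneg (x0*y0 + x1*y1),
    mul_nonneg h3 h4, sq_nonneg (Real.sqrt (x0^2+x1^2) * Real.sqrt (y0^2+y1^2) - (x0*y0+x1*y1))]

/-- Core sign lemma. -/
lemma key_core (σ κ ag am bg bm wg wm l : ℝ) (hσ : 0 < σ)
    (ham : 0 < am) (hFa : 0 ≤ σ*ag + κ*am)
    (hbm : bm ≤ 0)
    (hwm : 0 < wm) (hFw : σ*wg + κ*wm < 0)
    (hl1 : l ≤ 1)
    (hwg : wg = l*ag + (1-l)*bg) (hwm' : wm = l*am + (1-l)*bm) :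
    Real.sqrt (bg^2+bm^2) * ag + Real.sqrt (ag^2+am^2) * bg ≤ 0 := by
  -- l < 1
  have hlne : l ≠ 1 := by
    rintro rfl
    simp only [sub_self, zero_mul, add_zero, one_mul] at hwg hwm'
    rw [hwg] at hFw
    rw [hwm'] at hFw
    linarith
  have hl : l < 1 := lt_of_le_of_ne hl1 hlne
  -- det(a,w) > 0
  have hdetaw : 0 < ag*wm - am*wg := by nlinarith [mul_lt_mul_of_pos_left hFw ham]
  have hD : 0 < ag*bm - am*bg := by
    have : ag*wm - am*wg = (1-l)*(ag*bm - am*bg) := by rw [hwg, hwm']; ring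
    nlinarith
  rcases le_or_gt ag 0 with hag | hag
  · rcases le_or_gt bg 0 with hbg | hbg
    · have t1 : Real.sqrt (bg^2+bm^2) * ag ≤ 0 :=
        mul_nonpos_of_nonneg_of_nonpos (Real.sqrt_nonneg _) hag
      have t2 : Real.sqrt (ag^2+am^2) * bg ≤ 0 :=
        mul_nonpos_of_nonneg_of_nonpos (Real.sqrt_nonneg _) hbg
      linarith
    · -- ag ≤ 0, bg > 0 : then bm < 0, ag < 0
      have h1 : 0 < ag*bm := by nlinarith
      have hbm' : bm < 0 := by nlinarith
      have hag' : ag < 0 := by nlinarith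
      -- squares: (ag²+am²)bg² ≤ (bg²+bm²)ag²
      have h2 : 0 < am*bg := mul_pos ham hbg
      have h3 : 0 < ag*bm + am*bg := by nlinarith
      have hsq : (ag^2+am^2)*bg^2 ≤ (bg^2+bm^2)*ag^2 := by nlinarith [mul_pos hD h3]
      have key : Real.sqrt (ag^2+am^2) * bg ≤ Real.sqrt (bg^2+bm^2) * (-ag) := by
        have e1 : Real.sqrt (ag^2+am^2) * bg = Real.sqrt ((ag^2+am^2)*bg^2) := by
          rw [Real.sqrt_mul (by positivity), Real.sqrt_sq hbg.le]
        have e2 : Real.sqrt (bg^2+bm^2) * (-ag) = Real.sqrt ((bg^2+bm^2)*ag^2) := by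
          rw [Real.sqrt_mul (by positivity), show ag^2 = (-ag)^2 by ring,
            Real.sqrt_sq (by linarith)]
        rw [e1, e2]
        exact Real.sqrt_le_sqrt (by nlinarith)
      linarith
  · -- ag > 0, then bg < 0
    have hbg : bg < 0 := by nlinarith
    have h2 : am*bg < 0 := mul_neg_of_pos_of_neg ham hbg
    have h3 : ag*bm ≤ 0 := mul_nonpos_of_nonneg_of_nonpos hag.le hbm
    have h4 : am*bg + ag*bm < 0 := by linarith
    have h5 : am*bg - ag*bm < 0 := by linarith
    have hsq : (bg^2+bm^2)*ag^2 ≤ (ag^2+am^2)*bg^2 := by nlinarith [mul_pos_of_neg_of_neg h5 h4]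
    have key : Real.sqrt (bg^2+bm^2) * ag ≤ Real.sqrt (ag^2+am^2) * (-bg) := by
      have e1 : Real.sqrt (bg^2+bm^2) * ag = Real.sqrt ((bg^2+bm^2)*ag^2) := by
        rw [Real.sqrt_mul (by positivity), Real.sqrt_sq hag.le]
      have e2 : Real.sqrt (ag^2+am^2) * (-bg) = Real.sqrt ((ag^2+am^2)*bg^2) := by
        rw [Real.sqrt_mul (by positivity), show bg^2 = (-bg)^2 by ring,
          Real.sqrt_sq (by linarith)]
      rw [e1, e2]
      exact Real.sqrt_le_sqrt hsq
    linarith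

/-- The key geometric inequality: if the segment from `a` to `b` crosses the open wedge
(witnessed by `w`), and `c` lies in the opposite closed wedge, then the path `a → c → b`
has length at least `‖a‖ + ‖b‖`. All in coordinates. -/
lemma key4R (s c : ℝ) (hs : 0 < s) (hc : 0 < c) (hsc : s^2 + c^2 = 1)
    (a0 a1 b0 b1 c0 c1 w0 w1 l : ℝ)
    (hl0 : 0 ≤ l) (hl1 : l ≤ 1)
    (hw0 : w0 = l*a0 + (1-l)*b0) (hw1 : w1 = l*a1 + (1-l)*b1)
    (ha1 : a0*s - a1*c ≤ 0) (ha2 : 0 < a0*s + a1*c)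
    (hb1 : 0 < b0*s - b1*c) (hb2 : b0*s + b1*c ≤ 0)
    (hwa : 0 < w0*s - w1*c) (hwb : 0 < w0*s + w1*c)
    (hc1 : c0*s - c1*c ≤ 0) (hc2 : c0*s + c1*c ≤ 0) :
    Real.sqrt (a0^2+a1^2) + Real.sqrt (b0^2+b1^2) ≤
      Real.sqrt ((a0-c0)^2+(a1-c1)^2) + Real.sqrt ((c0-b0)^2+(c1-b1)^2) := by
  set Na := Real.sqrt (a0^2+a1^2) with hNa
  set Nb := Real.sqrt (b0^2+b1^2) with hNb
  have hA : (0:ℝ) < a0^2+a1^2 := by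
    rcases eq_or_ne a0 0 with h0|h0
    · rcases eq_or_ne a1 0 with h1|h1
      · rw [h0, h1] at ha2; simp at ha2
      · positivity
    · positivity
  have hB : (0:ℝ) < b0^2+b1^2 := by
    rcases eq_or_ne b0 0 with h0|h0
    · rcases eq_or_ne b1 0 with h1|h1
      · rw [h0, h1] at hb1; simp at hb1
      · positivity
    · positivity
  have hNa0 : 0 < Na := Real.sqrt_pos.mpr hA
  have hNb0 : 0 < Nb := Real.sqrt_pos.mpr hB
  have hNa2 : Na^2 = a0^2+a1^2 := Real.sq_sqrt hA.le
  have hNb2 : Nb^2 = b0^2+b1^2 := Real.sq_sqrt hB.le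
  -- first application of key_core (g₁ direction)
  have C1 : Nb * (-a0*c+a1*s) + Na * (-b0*c+b1*s) ≤ 0 := by
    have eFa : 2*s*c*(-a0*c+a1*s) + (c^2-s^2)*(a0*s+a1*c) = a1*c - a0*s := by
      linear_combination (a1*c - a0*s) * hsc
    have eFw : 2*s*c*(-w0*c+w1*s) + (c^2-s^2)*(w0*s+w1*c) = w1*c - w0*s := by
      linear_combination (w1*c - w0*s) * hsc
    have h := key_core (2*s*c) (c^2-s^2) (-a0*c+a1*s) (a0*s+a1*c) (-b0*c+b1*s) (b0*s+b1*c)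
      (-w0*c+w1*s) (w0*s+w1*c) l (by positivity) ha2
      (by rw [eFa]; linarith) hb2 hwb (by rw [eFw]; linarith) hl1
      (by rw [hw0, hw1]; ring) (by rw [hw0, hw1]; ring)
    have e1 : (-b0*c+b1*s)^2 + (b0*s+b1*c)^2 = b0^2+b1^2 := by
      linear_combination (b0^2+b1^2) * hsc
    have e2 : (-a0*c+a1*s)^2 + (a0*s+a1*c)^2 = a0^2+a1^2 := by
      linear_combination (a0^2+a1^2) * hsc
    rw [e1, e2] at h
    exact h
  -- second application of key_core (g₂ direction, mirrored)
  have C2 : Na * (-b0*c-b1*s) + Nb * (-a0*c-a1*s) ≤ 0 := by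
    have eFa : 2*s*c*(-b0*c-b1*s) + (c^2-s^2)*(b0*s-b1*c) = -(b1*c) - b0*s := by
      linear_combination (-(b1*c) - b0*s) * hsc
    have eFw : 2*s*c*(-w0*c-w1*s) + (c^2-s^2)*(w0*s-w1*c) = -(w1*c) - w0*s := by
      linear_combination (-(w1*c) - w0*s) * hsc
    have h := key_core (2*s*c) (c^2-s^2) (-b0*c-b1*s) (b0*s-b1*c) (-a0*c-a1*s) (a0*s-a1*c)
      (-w0*c-w1*s) (w0*s-w1*c) (1-l) (by positivity) hb1
      (by rw [eFa]; linarith) ha1 hwa (by rw [eFw]; linarith) (by linarith)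
      (by rw [hw0, hw1]; ring) (by rw [hw0, hw1]; ring)
    have e1 : (-a0*c-a1*s)^2 + (a0*s-a1*c)^2 = a0^2+a1^2 := by
      linear_combination (a0^2+a1^2) * hsc
    have e2 : (-b0*c-b1*s)^2 + (b0*s-b1*c)^2 = b0^2+b1^2 := by
      linear_combination (b0^2+b1^2) * hsc
    rw [e1, e2] at h
    exact h
  -- combine: Nb*⟨c,a⟩ + Na*⟨c,b⟩ ≤ 0
  have hS : 0 ≤ -(c0*s - c1*c) := by linarith
  have hT : 0 ≤ -(c0*s + c1*c) := by linarith
  have hI : Nb*(c0*a0+c1*a1) + Na*(c0*b0+c1*b1) ≤ 0 := by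
    have key : (2*s*c) * (Nb*(c0*a0+c1*a1) + Na*(c0*b0+c1*b1)) =
        (-(c0*s - c1*c)) * (Nb * (-a0*c+a1*s) + Na * (-b0*c+b1*s))
        + (-(c0*s + c1*c)) * (Na * (-b0*c-b1*s) + Nb * (-a0*c-a1*s)) := by ring
    have h1 : (-(c0*s - c1*c)) * (Nb * (-a0*c+a1*s) + Na * (-b0*c+b1*s)) ≤ 0 :=
      mul_nonpos_of_nonneg_of_nonpos hS C1
    have h2 : (-(c0*s + c1*c)) * (Na * (-b0*c-b1*s) + Nb * (-a0*c-a1*s)) ≤ 0 :=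
      mul_nonpos_of_nonneg_of_nonpos hT C2
    have hsc2 : (0:ℝ) < 2*s*c := by positivity
    have h3 : (2*s*c) * (Nb*(c0*a0+c1*a1) + Na*(c0*b0+c1*b1)) ≤ (2*s*c) * 0 := by
      rw [key]; linarith
    exact le_of_mul_le_mul_left (by linarith) hsc2
  -- Cauchy–Schwarz assembly
  have cs1 : a0*(a0-c0) + a1*(a1-c1) ≤ Real.sqrt ((a0-c0)^2+(a1-c1)^2) * Na := by
    have := cs2 (a0-c0) (a1-c1) a0 a1
    rw [← hNa] at this
    linarith
  have cs2' : b0*(b0-c0) + b1*(b1-c1) ≤ Real.sqrt ((c0-b0)^2+(c1-b1)^2) * Nb := by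
    have h := cs2 (b0-c0) (b1-c1) b0 b1
    have e : (b0-c0)^2+(b1-c1)^2 = (c0-b0)^2+(c1-b1)^2 := by ring
    rw [e, ← hNb] at h
    linarith
  set u := Real.sqrt ((a0-c0)^2+(a1-c1)^2) with hu
  set v := Real.sqrt ((c0-b0)^2+(c1-b1)^2) with hv
  have hu0 : 0 ≤ u := Real.sqrt_nonneg _
  have hv0 : 0 ≤ v := Real.sqrt_nonneg _
  have m1 : Na^2 - (c0*a0+c1*a1) ≤ u * Na := by
    have e : a0*(a0-c0)+a1*(a1-c1) = (a0^2+a1^2) - (c0*a0+c1*a1) := by ring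
    rw [e] at cs1; linarith
  have m2 : Nb^2 - (c0*b0+c1*b1) ≤ v * Nb := by
    have e : b0*(b0-c0)+b1*(b1-c1) = (b0^2+b1^2) - (c0*b0+c1*b1) := by ring
    rw [e] at cs2'; linarith
  have p1 := mul_le_mul_of_nonneg_right m1 hNb0.le
  have p2 := mul_le_mul_of_nonneg_right m2 hNa0.le
  have hprod := mul_pos hNa0 hNb0
  have final : Na*Nb*(Na+Nb) ≤ Na*Nb*(u+v) := by linarith [p1, p2, hI]
  exact le_of_mul_le_mul_left final hprod
lemma pt_ext {x y : Pt} (h0 : x 0 = y 0) (h1 : x 1 = y 1) : x = y := by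
  ext i
  fin_cases i <;> assumption

lemma equiv_symm_apply (v : Fin 2 → ℝ) (i : Fin 2) :
    ((WithLp.equiv 2 (Fin 2 → ℝ)).symm v) i = v i := rfl

lemma norm_pt (x : Pt) : ‖x‖ = Real.sqrt ((x 0)^2 + (x 1)^2) := by
  rw [EuclideanSpace.norm_eq]
  simp [Fin.sum_univ_two, Real.norm_eq_abs, sq_abs]

lemma sub_coord (x y : Pt) (i : Fin 2) : (x - y) i = x i - y i := rfl
lemma add_coord (x y : Pt) (i : Fin 2) : (x + y) i = x i + y i := rfl
lemma smul_coord (r : ℝ) (x : Pt) (i : Fin 2) : (r • x) i = r * x i := rfl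

/-- Half-plane description of the game region. -/
lemma mem_region_iff {θ₀ : ℝ} (hθ : θ₀ ∈ Set.Ioo 0 (Real.pi / 2)) (x : Pt) :
    x ∈ gameRegion θ₀ ↔
      x 0 * Real.sin θ₀ - x 1 * Real.cos θ₀ ≤ 0 ∨
      x 0 * Real.sin θ₀ + x 1 * Real.cos θ₀ ≤ 0 := by
  obtain ⟨hθ0, hθπ⟩ := hθ
  have hπ := Real.pi_pos
  have hθπ' : θ₀ < Real.pi := by linarith
  have hs : 0 < Real.sin θ₀ := Real.sin_pos_of_pos_of_lt_pi hθ0 hθπ'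
  have hc : 0 < Real.cos θ₀ := Real.cos_pos_of_mem_Ioo ⟨by linarith, hθπ⟩
  constructor
  · rintro ⟨ρ, θ, hρ, ⟨hθ1, hθ2⟩, rfl⟩
    simp only [equiv_symm_apply]
    simp only [Matrix.cons_val_zero, Matrix.cons_val_one, Matrix.head_cons]
    rcases le_or_gt θ (Real.pi + θ₀) with h | h
    · left
      have h1 : 0 ≤ Real.sin (θ - θ₀) :=
        Real.sin_nonneg_of_nonneg_of_le_pi (by linarith) (by linarith)
      rw [Real.sin_sub] at h1
      nlinarith
    · right
      have h1 : 0 ≤ Real.sin (θ + θ₀ - Real.pi) :=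
        Real.sin_nonneg_of_nonneg_of_le_pi (by linarith) (by linarith)
      rw [Real.sin_sub_pi] at h1
      rw [Real.sin_add] at h1
      nlinarith
  · intro h
    rcases eq_or_ne x 0 with rfl | hx
    · exact ⟨0, θ₀, le_refl _, ⟨le_refl _, by linarith⟩, by
        apply pt_ext <;> simp [equiv_symm_apply]⟩
    have hx2 : (0:ℝ) < (x 0)^2 + (x 1)^2 := by
      rcases eq_or_ne (x 0) 0 with h0|h0
      · rcases eq_or_ne (x 1) 0 with h1|h1
        · exact absurd (pt_ext (h0.trans rfl) (h1.trans rfl)) hx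
        · positivity
      · positivity
    set ρ := Real.sqrt ((x 0)^2 + (x 1)^2) with hρdef
    have hρ : 0 < ρ := Real.sqrt_pos.mpr hx2
    have hρ2 : ρ^2 = (x 0)^2 + (x 1)^2 := Real.sq_sqrt hx2.le
    have hb1 : -1 ≤ x 0 / ρ := by
      rw [le_div_iff₀ hρ]; nlinarith
    have hb2 : x 0 / ρ ≤ 1 := by
      rw [div_le_iff₀ hρ]; nlinarith
    set φ := Real.arccos (x 0 / ρ) with hφdef
    have hφ0 : 0 ≤ φ := Real.arccos_nonneg _
    have hφπ : φ ≤ Real.pi := Real.arccos_le_pi _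
    have hcosφ : Real.cos φ = x 0 / ρ := Real.cos_arccos hb1 hb2
    have hsinφ : Real.sin φ = |x 1| / ρ := by
      rw [hφdef, Real.sin_arccos]
      rw [show 1 - (x 0 / ρ)^2 = (x 1)^2 / ρ^2 by field_simp; nlinarith]
      rw [Real.sqrt_div (sq_nonneg (x 1)), Real.sqrt_sq_eq_abs, Real.sqrt_sq hρ.le]
    rcases le_or_gt 0 (x 1) with hx1 | hx1
    · -- θ := φ
      have habs : |x 1| = x 1 := abs_of_nonneg hx1
      have hφθ₀ : θ₀ ≤ φ := by
        rcases h with hA | hB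
        · -- sin (φ - θ₀) ≥ 0 forces φ ≥ θ₀
          by_contra hlt
          push_neg at hlt
          have h1 : Real.sin (φ - θ₀) < 0 := by
            apply Real.sin_neg_of_neg_of_neg_pi_lt (by linarith)
            linarith
          rw [Real.sin_sub] at h1
          have h2 : Real.sin φ * Real.cos θ₀ - Real.cos φ * Real.sin θ₀ < 0 := h1
          rw [hcosφ, hsinφ, habs] at h2
          have h2' : (x 1 * Real.cos θ₀ - x 0 * Real.sin θ₀)/ρ < 0 := by
            rw [show (x 1 * Real.cos θ₀ - x 0 * Real.sin θ₀)/ρ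
              = x 1/ρ * Real.cos θ₀ - x 0/ρ * Real.sin θ₀ from by ring]
            exact h2
          have h3 : x 1 * Real.cos θ₀ - x 0 * Real.sin θ₀ < 0 := by
            by_contra hcon
            push_neg at hcon
            have := div_nonneg hcon hρ.le
            linarith
          linarith
        · -- x 0 ≤ 0 so φ ≥ π/2 > θ₀
          have hx0 : x 0 ≤ 0 := by nlinarith
          have hcos : Real.cos φ ≤ 0 := by rw [hcosφ]; exact div_nonpos_of_nonpos_of_nonneg hx0 hρ.le
          by_contra hlt
          push_neg at hlt
          have : 0 < Real.cos φ := Real.cos_pos_of_mem_Ioo ⟨by linarith, by linarith⟩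
          linarith
      refine ⟨ρ, φ, hρ.le, ⟨hφθ₀, by linarith⟩, ?_⟩
      apply pt_ext
      · rw [equiv_symm_apply]; simp only [Matrix.cons_val_zero]
        rw [hcosφ]; field_simp
      · rw [equiv_symm_apply]; simp only [Matrix.cons_val_one, Matrix.head_cons, Matrix.cons_val_zero]
        rw [hsinφ, habs]; field_simp
    · -- θ := 2π - φ
      have habs : |x 1| = -(x 1) := abs_of_neg hx1
      have hφθ₀ : θ₀ ≤ φ := by
        rcases h with hA | hB
        · -- x 0 < 0 since x0 s ≤ x1 c < 0
          have hx0 : x 0 < 0 := by nlinarith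
          have hcos : Real.cos φ < 0 := by
            rw [hcosφ]; exact div_neg_of_neg_of_pos hx0 hρ
          by_contra hlt
          push_neg at hlt
          have : 0 ≤ Real.cos φ := Real.cos_nonneg_of_mem_Icc ⟨by linarith, by linarith⟩
          linarith
        · by_contra hlt
          push_neg at hlt
          have h1 : Real.sin (φ - θ₀) < 0 := by
            apply Real.sin_neg_of_neg_of_neg_pi_lt (by linarith)
            linarith
          rw [Real.sin_sub] at h1
          rw [hcosφ, hsinφ, habs] at h1
          have h1' : ((-(x 1)) * Real.cos θ₀ - x 0 * Real.sin θ₀)/ρ < 0 := by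
            rw [show ((-(x 1)) * Real.cos θ₀ - x 0 * Real.sin θ₀)/ρ
              = -x 1/ρ * Real.cos θ₀ - x 0/ρ * Real.sin θ₀ from by ring]
            exact h1
          have h3 : (-(x 1)) * Real.cos θ₀ - x 0 * Real.sin θ₀ < 0 := by
            by_contra hcon
            push_neg at hcon
            have := div_nonneg hcon hρ.le
            linarith
          linarith
      refine ⟨ρ, 2 * Real.pi - φ, hρ.le, ⟨by linarith, by linarith⟩, ?_⟩
      have hcos2 : Real.cos (2 * Real.pi - φ) = Real.cos φ := by
        rw [Real.cos_sub]; simp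
      have hsin2 : Real.sin (2 * Real.pi - φ) = -Real.sin φ := by
        rw [Real.sin_sub]; simp
      apply pt_ext
      · rw [equiv_symm_apply]; simp only [Matrix.cons_val_zero]
        rw [hcos2, hcosφ]; field_simp
      · rw [equiv_symm_apply]; simp only [Matrix.cons_val_one, Matrix.head_cons, Matrix.cons_val_zero]
        rw [hsin2, hsinφ, habs]; field_simp
section Region
variable {θ₀ : ℝ}

lemma smul_mem_region {x : Pt} (hx : x ∈ gameRegion θ₀) {r : ℝ} (hr : 0 ≤ r) :
    r • x ∈ gameRegion θ₀ := by
  obtain ⟨ρ, θ, hρ, hθm, rfl⟩ := hx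
  exact ⟨r * ρ, θ, mul_nonneg hr hρ, hθm, by
    apply pt_ext <;> simp [equiv_symm_apply, smul_eq_mul] <;> ring⟩

lemma hθ_trig {θ₀ : ℝ} (hθ : θ₀ ∈ Set.Ioo 0 (Real.pi / 2)) :
    0 < Real.sin θ₀ ∧ 0 < Real.cos θ₀ := by
  have hπ := Real.pi_pos
  exact ⟨Real.sin_pos_of_pos_of_lt_pi hθ.1 (by linarith [hθ.2]),
    Real.cos_pos_of_mem_Ioo ⟨by linarith [hθ.1], hθ.2⟩⟩

lemma ray_theta0_mem (hθ : θ₀ ∈ Set.Ioo 0 (Real.pi / 2)) {r : ℝ} (hr : 0 ≤ r) :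
    (WithLp.equiv 2 (Fin 2 → ℝ)).symm ![r * Real.cos θ₀, r * Real.sin θ₀] ∈ gameRegion θ₀ := by
  have hπ := Real.pi_pos
  exact ⟨r, θ₀, hr, ⟨le_refl _, by linarith [hθ.1, hθ.2]⟩, rfl⟩

lemma segment_zero_mem {b : Pt} (hb : b ∈ gameRegion θ₀) :
    segment ℝ 0 b ⊆ gameRegion θ₀ := by
  intro z hz
  rw [segment_eq_image] at hz
  obtain ⟨t, ht, hz'⟩ := hz
  rw [← hz']
  simp only [smul_zero, sub_zero, zero_add]
  exact smul_mem_region hb ht.1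

lemma segment_to_zero_mem {a : Pt} (ha : a ∈ gameRegion θ₀) :
    segment ℝ a 0 ⊆ gameRegion θ₀ := by
  rw [segment_symm]
  exact segment_zero_mem ha

lemma zero_mem_region (hθ : θ₀ ∈ Set.Ioo 0 (Real.pi / 2)) : (0 : Pt) ∈ gameRegion θ₀ := by
  have hπ := Real.pi_pos
  exact ⟨0, θ₀, le_refl _, ⟨le_refl _, by linarith [hθ.1, hθ.2]⟩, by
    apply pt_ext <;> simp [equiv_symm_apply]⟩

end Region

section DL
variable {θ₀ : ℝ}

lemma dL_nonneg (x y : Pt) : 0 ≤ dL θ₀ x y := by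
  unfold dL
  split <;> positivity

lemma dL_symm (x y : Pt) : dL θ₀ x y = dL θ₀ y x := by
  unfold dL
  rw [segment_symm, norm_sub_rev, add_comm]

lemma dL_self {x : Pt} (hx : x ∈ gameRegion θ₀) : dL θ₀ x x = 0 := by
  unfold dL
  rw [if_pos]
  · simp
  · rw [segment_same]
    intro z hz
    rw [Set.mem_singleton_iff] at hz
    rwa [hz]

lemma dL_pos {x y : Pt} (hxy : x ≠ y) : 0 < dL θ₀ x y := by
  unfold dL
  split
  · rw [norm_pos_iff, sub_ne_zero]; exact hxy
  · rcases eq_or_ne x 0 with rfl | hx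
    · have h1 : y ≠ 0 := fun h => hxy h.symm
      have h2 : 0 < ‖y‖ := norm_pos_iff.mpr h1
      have h3 : (0:ℝ) ≤ ‖(0:Pt)‖ := norm_nonneg _
      linarith
    · have h2 : 0 < ‖x‖ := norm_pos_iff.mpr hx
      have h3 : (0:ℝ) ≤ ‖y‖ := norm_nonneg _
      linarith

lemma dL_le_norm {x y : Pt} (h : segment ℝ x y ⊆ gameRegion θ₀) :
    dL θ₀ x y = ‖x - y‖ := by
  unfold dL
  rw [if_pos h]

/-- The fundamental path inequality. -/
lemma dL_le_path (hθ : θ₀ ∈ Set.Ioo 0 (Real.pi / 2)) {K T : ℝ} (hK : 0 ≤ K) (hT : 0 ≤ T)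
    {p : ℝ → Pt} (hreg : ∀ t ∈ Set.Icc 0 T, p t ∈ gameRegion θ₀)
    (hLip : ∀ s t : ℝ, s ∈ Set.Icc 0 T → t ∈ Set.Icc 0 T → s ≤ t → ‖p t - p s‖ ≤ K * (t - s)) :
    dL θ₀ (p 0) (p T) ≤ K * T := by
  obtain ⟨hs, hc⟩ := hθ_trig hθ
  have hsc : Real.sin θ₀ ^ 2 + Real.cos θ₀ ^ 2 = 1 := Real.sin_sq_add_cos_sq θ₀
  have hmemT : T ∈ Set.Icc (0:ℝ) T := ⟨hT, le_refl T⟩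
  have hmem0 : (0:ℝ) ∈ Set.Icc (0:ℝ) T := ⟨le_refl 0, hT⟩
  have hcont : ContinuousOn p (Set.Icc 0 T) := by
    apply LipschitzOnWith.continuousOn (K := Real.toNNReal K)
    apply LipschitzOnWith.of_dist_le_mul
    intro a ha b hb
    have hKK : (Real.toNNReal K : ℝ) = K := Real.coe_toNNReal K hK
    rcases le_total a b with hab | hab
    · rw [dist_comm, dist_eq_norm, Real.dist_eq, abs_of_nonpos (by linarith : a - b ≤ 0)]
      calc ‖p b - p a‖ ≤ K * (b - a) := hLip a b ha hb hab
        _ = Real.toNNReal K * -(a-b) := by rw [hKK]; ring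
    · rw [dist_eq_norm, Real.dist_eq, abs_of_nonneg (by linarith : (0:ℝ) ≤ a - b)]
      calc ‖p a - p b‖ ≤ K * (a - b) := hLip b a hb ha hab
        _ = Real.toNNReal K * (a-b) := by rw [hKK]
  unfold dL
  split
  case isTrue h =>
    have := hLip 0 T hmem0 hmemT hT
    rw [norm_sub_rev] at this
    simpa using this
  case isFalse h =>
    rw [Set.not_subset] at h
    obtain ⟨w, hwseg, hwout⟩ := h
    rw [mem_region_iff hθ] at hwout
    push_neg at hwout
    obtain ⟨hw1, hw2⟩ := hwout
    rw [segment_eq_image] at hwseg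
    obtain ⟨l, hl, hweq⟩ := hwseg
    set P0 := p 0 with hP0
    set PT := p T with hPT
    have hw0 : w 0 = (1-l) * (P0 0) + l * (PT 0) := by
      rw [← hweq]; simp only [add_coord, smul_coord, sub_coord]
    have hw1' : w 1 = (1-l) * (P0 1) + l * (PT 1) := by
      rw [← hweq]; simp only [add_coord, smul_coord, sub_coord]
    set s' := Real.sin θ₀
    set c' := Real.cos θ₀
    have r0 := (mem_region_iff hθ P0).mp (hreg 0 hmem0)
    have rT := (mem_region_iff hθ PT).mp (hreg T hmemT)
    have hf1w : w 0 * s' - w 1 * c' =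
        (1-l)*(P0 0 * s' - P0 1 * c') + l*(PT 0 * s' - PT 1 * c') := by
      rw [hw0, hw1']; ring
    have hf2w : w 0 * s' + w 1 * c' =
        (1-l)*(P0 0 * s' + P0 1 * c') + l*(PT 0 * s' + PT 1 * c') := by
      rw [hw0, hw1']; ring
    have hl0 : (0:ℝ) ≤ l := hl.1
    have hl1 : l ≤ 1 := hl.2
    have hc0 : ContinuousOn (fun t => p t 0 * s' - p t 1 * c' - (p t 0 * s' + p t 1 * c'))
        (Set.Icc 0 T) := by
      have h0 : ContinuousOn (fun t => p t 0) (Set.Icc 0 T) :=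
        ((continuous_apply (0 : Fin 2)).comp (PiLp.continuous_ofLp 2 _)).comp_continuousOn hcont
      have h1 : ContinuousOn (fun t => p t 1) (Set.Icc 0 T) :=
        ((continuous_apply (1 : Fin 2)).comp (PiLp.continuous_ofLp 2 _)).comp_continuousOn hcont
      fun_prop
    by_cases hA0 : P0 0 * s' - P0 1 * c' ≤ 0
    · -- P0 ∈ A \ B, PT ∈ B \ A
      have hf1T : 0 < PT 0 * s' - PT 1 * c' := by
        by_contra hcon
        push_neg at hcon
        have h1 := mul_nonpos_of_nonneg_of_nonpos (by linarith : (0:ℝ) ≤ 1-l) hA0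
        have h2 := mul_nonpos_of_nonneg_of_nonpos hl0 hcon
        have : w 0 * s' - w 1 * c' ≤ 0 := by rw [hf1w]; linarith
        linarith
      have hf2T : PT 0 * s' + PT 1 * c' ≤ 0 := rT.resolve_left (by linarith)
      have hf2P0 : 0 < P0 0 * s' + P0 1 * c' := by
        by_contra hcon
        push_neg at hcon
        have h1 := mul_nonpos_of_nonneg_of_nonpos (by linarith : (0:ℝ) ≤ 1-l) hcon
        have h2 := mul_nonpos_of_nonneg_of_nonpos hl0 hf2T
        have : w 0 * s' + w 1 * c' ≤ 0 := by rw [hf2w]; linarith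
        linarith
      have h0mem' : (0:ℝ) ∈ Set.Icc
          (p 0 0 * s' - p 0 1 * c' - (p 0 0 * s' + p 0 1 * c'))
          (p T 0 * s' - p T 1 * c' - (p T 0 * s' + p T 1 * c')) := by
        rw [← hP0, ← hPT]
        constructor <;> [linarith; linarith]
      obtain ⟨ts, hts, hgts⟩ := intermediate_value_Icc hT hc0 h0mem'
      simp only at hgts
      have hr := (mem_region_iff hθ (p ts)).mp (hreg ts hts)
      have hcc1 : p ts 0 * s' - p ts 1 * c' ≤ 0 := by
        rcases hr with h | h
        · exact h
        · linarith
      have hcc2 : p ts 0 * s' + p ts 1 * c' ≤ 0 := by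
        rcases hr with h | h
        · linarith
        · exact h
      have KEY := key4R s' c' hs hc hsc (P0 0) (P0 1) (PT 0) (PT 1)
        (p ts 0) (p ts 1) (w 0) (w 1) (1-l) (by linarith) (by linarith)
        (by rw [hw0]; ring) (by rw [hw1']; ring)
        hA0 hf2P0 hf1T hf2T hw1 hw2 hcc1 hcc2
      have e0 : ‖P0‖ = Real.sqrt ((P0 0)^2 + (P0 1)^2) := norm_pt _
      have eT : ‖PT‖ = Real.sqrt ((PT 0)^2 + (PT 1)^2) := norm_pt _
      have e1 : ‖P0 - p ts‖ = Real.sqrt ((P0 0 - p ts 0)^2 + (P0 1 - p ts 1)^2) := by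
        rw [norm_pt, sub_coord, sub_coord]
      have e2 : ‖p ts - PT‖ = Real.sqrt ((p ts 0 - PT 0)^2 + (p ts 1 - PT 1)^2) := by
        rw [norm_pt, sub_coord, sub_coord]
      have b1 : ‖P0 - p ts‖ ≤ K * ts := by
        have hh := hLip 0 ts hmem0 hts hts.1
        rw [norm_sub_rev, ← hP0] at hh
        simpa using hh
      have b2 : ‖p ts - PT‖ ≤ K * (T - ts) := by
        have hh := hLip ts T hts hmemT hts.2
        rw [norm_sub_rev, ← hPT] at hh
        exact hh
      have heq : K * ts + K * (T - ts) = K * T := by ring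
      rw [e0, eT]
      rw [e1] at b1
      rw [e2] at b2
      linarith [KEY]
    · -- P0 ∈ B \ A, PT ∈ A \ B
      push_neg at hA0
      have hf2P0 : P0 0 * s' + P0 1 * c' ≤ 0 := r0.resolve_left (by linarith)
      have hf2T : 0 < PT 0 * s' + PT 1 * c' := by
        by_contra hcon
        push_neg at hcon
        have h1 := mul_nonpos_of_nonneg_of_nonpos (by linarith : (0:ℝ) ≤ 1-l) hf2P0
        have h2 := mul_nonpos_of_nonneg_of_nonpos hl0 hcon
        have : w 0 * s' + w 1 * c' ≤ 0 := by rw [hf2w]; linarith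
        linarith
      have hf1T : PT 0 * s' - PT 1 * c' ≤ 0 := rT.resolve_right (by linarith)
      have h0mem' : (0:ℝ) ∈ Set.Icc
          (p T 0 * s' - p T 1 * c' - (p T 0 * s' + p T 1 * c'))
          (p 0 0 * s' - p 0 1 * c' - (p 0 0 * s' + p 0 1 * c')) := by
        rw [← hP0, ← hPT]
        constructor <;> [linarith; linarith]
      obtain ⟨ts, hts, hgts⟩ := intermediate_value_Icc' hT hc0 h0mem'
      simp only at hgts
      have hr := (mem_region_iff hθ (p ts)).mp (hreg ts hts)
      have hcc1 : p ts 0 * s' - p ts 1 * c' ≤ 0 := by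
        rcases hr with h | h
        · exact h
        · linarith
      have hcc2 : p ts 0 * s' + p ts 1 * c' ≤ 0 := by
        rcases hr with h | h
        · linarith
        · exact h
      have KEY := key4R s' c' hs hc hsc (PT 0) (PT 1) (P0 0) (P0 1)
        (p ts 0) (p ts 1) (w 0) (w 1) l hl0 hl1
        (by rw [hw0]; ring) (by rw [hw1']; ring)
        hf1T hf2T hA0 hf2P0 hw1 hw2 hcc1 hcc2
      have e0 : ‖P0‖ = Real.sqrt ((P0 0)^2 + (P0 1)^2) := norm_pt _
      have eT : ‖PT‖ = Real.sqrt ((PT 0)^2 + (PT 1)^2) := norm_pt _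
      have e1 : ‖p ts - P0‖ = Real.sqrt ((p ts 0 - P0 0)^2 + (p ts 1 - P0 1)^2) := by
        rw [norm_pt, sub_coord, sub_coord]
      have e2 : ‖PT - p ts‖ = Real.sqrt ((PT 0 - p ts 0)^2 + (PT 1 - p ts 1)^2) := by
        rw [norm_pt, sub_coord, sub_coord]
      have b1 : ‖p ts - P0‖ ≤ K * ts := by
        have hh := hLip 0 ts hmem0 hts hts.1
        rw [← hP0] at hh
        simpa using hh
      have b2 : ‖PT - p ts‖ ≤ K * (T - ts) := by
        have hh := hLip ts T hts hmemT hts.2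
        rw [← hPT] at hh
        exact hh
      have heq : K * ts + K * (T - ts) = K * T := by ring
      rw [e0, eT]
      rw [e1] at b1
      rw [e2] at b2
      linarith [KEY]

end DL
section Controls

/-- A control is interval integrable on nonnegative intervals. -/
lemma IsControl.intervalIntegrable {u : ℝ → Pt} (hu : IsControl u) {a b : ℝ}
    (ha : 0 ≤ a) (hab : a ≤ b) : IntervalIntegrable u volume a b := by
  obtain ⟨hpw, hnorm⟩ := hu
  obtain ⟨s, hs⟩ := hpw a b
  rw [intervalIntegrable_iff_integrableOn_Ioc_of_le hab]
  have hsub : Set.Ioc a b \ (s : Set ℝ) ⊆ Set.Icc a b := fun t ht => Set.Ioc_subset_Icc_self ht.1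
  have hcont : ContinuousOn u (Set.Ioc a b \ (s : Set ℝ)) := by
    intro t ht
    exact (hs t (hsub ht) ht.2).continuousWithinAt
  have hmeas : MeasurableSet (Set.Ioc a b \ (s : Set ℝ)) :=
    measurableSet_Ioc.diff (s.finite_toSet.measurableSet)
  have hae : AEStronglyMeasurable u (volume.restrict (Set.Ioc a b \ (s : Set ℝ))) :=
    hcont.aestronglyMeasurable hmeas
  have hnull : volume.restrict (Set.Ioc a b) = volume.restrict (Set.Ioc a b \ (s : Set ℝ)) := by
    apply Measure.restrict_congr_set
    exact (MeasureTheory.diff_ae_eq_self.mpr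
      (measure_mono_null Set.inter_subset_right (s.finite_toSet.measure_zero _))).symm
  constructor
  · rw [hnull]; exact hae
  · apply MeasureTheory.HasFiniteIntegral.of_bounded (C := 1)
    filter_upwards [ae_restrict_mem measurableSet_Ioc] with t ht
    exact le_of_eq (hnorm t (le_trans ha ht.1.le))

lemma traj_zero (x₀ : Pt) (v : ℝ) (u : ℝ → Pt) : traj x₀ v u 0 = x₀ := by
  unfold traj
  rw [intervalIntegral.integral_same]
  simp

lemma traj_sub {u : ℝ → Pt} (hu : IsControl u) (x₀ : Pt) (v : ℝ) {s t : ℝ}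
    (hs : 0 ≤ s) (hst : s ≤ t) :
    traj x₀ v u t - traj x₀ v u s = v • ∫ τ in s..t, u τ := by
  unfold traj
  have h1 : IntervalIntegrable u volume 0 s := hu.intervalIntegrable (le_refl 0) hs
  have h2 : IntervalIntegrable u volume s t := hu.intervalIntegrable hs hst
  rw [← intervalIntegral.integral_add_adjacent_intervals h1 h2]
  rw [smul_add]
  abel

lemma traj_lip {u : ℝ → Pt} (hu : IsControl u) (x₀ : Pt) {v : ℝ} (hv : 0 ≤ v) {s t : ℝ}
    (hs : 0 ≤ s) (hst : s ≤ t) :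
    ‖traj x₀ v u t - traj x₀ v u s‖ ≤ v * (t - s) := by
  rw [traj_sub hu x₀ v hs hst, norm_smul, Real.norm_eq_abs, abs_of_nonneg hv]
  have hb : ‖∫ τ in s..t, u τ‖ ≤ 1 * |t - s| := by
    apply intervalIntegral.norm_integral_le_of_norm_le_const
    intro x hx
    rw [Set.uIoc_of_le hst] at hx
    exact le_of_eq (hu.2 x (le_trans hs hx.1.le))
  rw [one_mul, abs_of_nonneg (by linarith)] at hb
  exact mul_le_mul_of_nonneg_left hb hv

lemma traj_continuousOn {u : ℝ → Pt} (hu : IsControl u) (x₀ : Pt) {v : ℝ} (hv : 0 ≤ v) :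
    ContinuousOn (traj x₀ v u) (Set.Ici 0) := by
  apply LipschitzOnWith.continuousOn (K := Real.toNNReal v)
  apply LipschitzOnWith.of_dist_le_mul
  intro a ha b hb
  have hKK : (Real.toNNReal v : ℝ) = v := Real.coe_toNNReal v hv
  rcases le_total a b with hab | hab
  · rw [dist_comm, dist_eq_norm, Real.dist_eq, abs_of_nonpos (by linarith : a - b ≤ 0)]
    calc ‖traj x₀ v u b - traj x₀ v u a‖ ≤ v * (b - a) := traj_lip hu x₀ hv ha hab
      _ = Real.toNNReal v * -(a-b) := by rw [hKK]; ring
  · rw [dist_eq_norm, Real.dist_eq, abs_of_nonneg (by linarith : (0:ℝ) ≤ a - b)]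
    calc ‖traj x₀ v u a - traj x₀ v u b‖ ≤ v * (a - b) := traj_lip hu x₀ hv hb hab
      _ = Real.toNNReal v * (a-b) := by rw [hKK]

/-- Constant control. -/
lemma isControl_const {d : Pt} (hd : ‖d‖ = 1) : IsControl (fun _ => d) := by
  refine ⟨fun a b => ⟨∅, fun t _ _ => continuous_const.continuousAt⟩, fun t _ => hd⟩

lemma traj_const (x₀ : Pt) (v : ℝ) (d : Pt) (t : ℝ) :
    traj x₀ v (fun _ => d) t = x₀ + (v * t) • d := by
  unfold traj
  rw [intervalIntegral.integral_const]
  rw [sub_zero, smul_smul]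

/-- Concatenation of controls: follow `u₁` until time `T`, then `u₂` (time-shifted). -/
def concatC (T : ℝ) (u₁ u₂ : ℝ → Pt) : ℝ → Pt := fun t => if t < T then u₁ t else u₂ (t - T)

lemma isControl_concat {T : ℝ} (hT : 0 ≤ T) {u₁ u₂ : ℝ → Pt}
    (h₁ : IsControl u₁) (h₂ : IsControl u₂) : IsControl (concatC T u₁ u₂) := by
  constructor
  · intro a b
    obtain ⟨s₁, hs₁⟩ := h₁.1 a b
    obtain ⟨s₂, hs₂⟩ := h₂.1 (a - T) (b - T)
    refine ⟨s₁ ∪ s₂.image (· + T) ∪ {T}, fun t ht hts => ?_⟩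
    simp only [Finset.mem_union, Finset.mem_image, Finset.mem_singleton, not_or, not_exists] at hts
    obtain ⟨⟨hts1, hts2⟩, htsT⟩ := hts
    rcases lt_trichotomy t T with hlt | heq | hgt
    · have heq : (fun x => concatC T u₁ u₂ x) =ᶠ[nhds t] u₁ := by
        filter_upwards [Iio_mem_nhds hlt] with x hx
        simp only [concatC, if_pos (Set.mem_Iio.mp hx)]
      exact ContinuousAt.congr (hs₁ t ht hts1) heq.symm
    · exact absurd heq htsT
    · have hcont2 : ContinuousAt (fun x => u₂ (x - T)) t := by
        apply ContinuousAt.comp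
        · apply hs₂ (t - T) ⟨by linarith [ht.1], by linarith [ht.2]⟩
          intro hmem
          exact hts2 (t - T) ⟨hmem, by ring⟩
        · fun_prop
      have heq : (fun x => concatC T u₁ u₂ x) =ᶠ[nhds t] (fun x => u₂ (x - T)) := by
        filter_upwards [Ioi_mem_nhds hgt] with x hx
        simp only [concatC, if_neg (not_lt.mpr (le_of_lt (Set.mem_Ioi.mp hx)))]
      exact ContinuousAt.congr hcont2 heq.symm
  · intro t ht
    unfold concatC
    split
    · exact h₁.2 t ht
    · next h => exact h₂.2 (t - T) (by linarith [not_lt.mp h])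

lemma traj_concat_left {T : ℝ} (hT : 0 ≤ T) {u₁ u₂ : ℝ → Pt} (x₀ : Pt) (v : ℝ)
    {t : ℝ} (ht : 0 ≤ t) (htT : t ≤ T) :
    traj x₀ v (concatC T u₁ u₂) t = traj x₀ v u₁ t := by
  unfold traj
  congr 1
  congr 1
  apply intervalIntegral.integral_congr_ae
  rw [Set.uIoc_of_le ht]
  filter_upwards [ae_iff.mpr (by simp : volume {(x:ℝ) | ¬ x ≠ T} = 0)] with x hx hmem
  have : x < T := lt_of_le_of_ne (le_trans hmem.2 htT) hx
  simp [concatC, this]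

lemma traj_concat_right {T : ℝ} (hT : 0 ≤ T) {u₁ u₂ : ℝ → Pt}
    (h₁ : IsControl u₁) (h₂ : IsControl u₂) (x₀ : Pt) (v : ℝ)
    {t : ℝ} (ht : T ≤ t) :
    traj x₀ v (concatC T u₁ u₂) t = traj (traj x₀ v u₁ T) v u₂ (t - T) := by
  have hcc : IsControl (concatC T u₁ u₂) := isControl_concat hT h₁ h₂
  have hI1 : IntervalIntegrable (concatC T u₁ u₂) volume 0 T :=
    hcc.intervalIntegrable (le_refl 0) hT
  have hI2 : IntervalIntegrable (concatC T u₁ u₂) volume T t :=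
    hcc.intervalIntegrable hT ht
  unfold traj
  rw [← intervalIntegral.integral_add_adjacent_intervals hI1 hI2]
  have e1 : ∫ s in (0:ℝ)..T, concatC T u₁ u₂ s = ∫ s in (0:ℝ)..T, u₁ s := by
    apply intervalIntegral.integral_congr_ae
    rw [Set.uIoc_of_le hT]
    filter_upwards [ae_iff.mpr (by simp : volume {(x:ℝ) | ¬ x ≠ T} = 0)] with x hx hmem
    have : x < T := lt_of_le_of_ne hmem.2 hx
    simp [concatC, this]
  have e2 : ∫ s in T..t, concatC T u₁ u₂ s = ∫ s in (0:ℝ)..(t - T), u₂ s := by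
    rw [show (0:ℝ) = T - T by ring, show t - T = t - T by rfl]
    rw [← intervalIntegral.integral_comp_sub_right u₂ T]
    apply intervalIntegral.integral_congr
    intro x hx
    rw [Set.uIcc_of_le ht] at hx
    simp only [concatC, if_neg (not_lt.mpr hx.1)]
  rw [e1, e2, smul_add]
  abel

end Controls
section Geo
variable {θ₀ : ℝ}

open Classical in
def outDir (θ₀ : ℝ) (x : Pt) : Pt :=
  if x = 0 then (WithLp.equiv 2 (Fin 2 → ℝ)).symm ![Real.cos θ₀, Real.sin θ₀]
  else ‖x‖⁻¹ • x

lemma norm_outDir (x : Pt) : ‖outDir θ₀ x‖ = 1 := by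
  classical
  unfold outDir
  split
  · rw [norm_pt]
    rw [equiv_symm_apply, equiv_symm_apply]
    simp only [Matrix.cons_val_zero, Matrix.cons_val_one, Matrix.head_cons]
    rw [show Real.cos θ₀ ^2 + Real.sin θ₀ ^2 = 1 from Real.cos_sq_add_sin_sq θ₀]
    exact Real.sqrt_one
  · next hx =>
    rw [norm_smul, Real.norm_eq_abs, abs_of_nonneg (by positivity)]
    exact inv_mul_cancel₀ (norm_ne_zero_iff.mpr hx)

lemma ray_mem (hθ : θ₀ ∈ Set.Ioo 0 (Real.pi / 2)) {x : Pt} (hx : x ∈ gameRegion θ₀)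
    {s : ℝ} (hs : 0 ≤ s) : x + s • outDir θ₀ x ∈ gameRegion θ₀ := by
  classical
  unfold outDir
  split
  · next h =>
    subst h
    rw [zero_add]
    have := ray_theta0_mem hθ (θ₀ := θ₀) hs
    convert this using 1
    apply pt_ext
    · rw [smul_coord, equiv_symm_apply, equiv_symm_apply]; simp
    · rw [smul_coord, equiv_symm_apply, equiv_symm_apply]; simp
  · next hx0 =>
    have hxn : (0:ℝ) < ‖x‖ := norm_pos_iff.mpr hx0
    have heq : x + s • (‖x‖⁻¹ • x) = (1 + s * ‖x‖⁻¹) • x := by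
      rw [add_smul, one_smul, smul_smul]
    rw [heq]
    exact smul_mem_region hx (by positivity)

/-- Travel along a segment from `a` to `b`, then continue with `u₂`. -/
lemma seg_then (hθ : θ₀ ∈ Set.Ioo 0 (Real.pi / 2)) {v : ℝ} (hv : 0 < v) {a b : Pt}
    (ha : a ∈ gameRegion θ₀)
    (hseg : segment ℝ a b ⊆ gameRegion θ₀) {u₂ : ℝ → Pt} (h₂ : IsControl u₂)
    (hadm₂ : ∀ t : ℝ, 0 ≤ t → traj b v u₂ t ∈ gameRegion θ₀) :
    ∃ u : ℝ → Pt, IsControl u ∧ (∀ t : ℝ, 0 ≤ t → traj a v u t ∈ gameRegion θ₀) ∧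
      (∀ t : ℝ, ‖b - a‖/v ≤ t → traj a v u t = traj b v u₂ (t - ‖b - a‖/v)) := by
  classical
  set L := ‖b - a‖ with hL
  have hL0 : 0 ≤ L := norm_nonneg _
  set d : Pt := if h : a = b then outDir θ₀ a else L⁻¹ • (b - a) with hd
  have hdnorm : ‖d‖ = 1 := by
    rw [hd]
    split
    · exact norm_outDir a
    · next hne =>
      have : L ≠ 0 := by
        rw [hL, norm_ne_zero_iff, sub_ne_zero]
        exact fun h => hne h.symm
      rw [norm_smul, Real.norm_eq_abs, abs_of_nonneg (by positivity), ← hL]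
      exact inv_mul_cancel₀ this
  have hreach : traj a v (fun _ => d) (L/v) = b := by
    rw [traj_const]
    rcases eq_or_ne a b with rfl | hne
    · have : L = 0 := by rw [hL]; simp
      rw [this]
      simp
    · rw [hd, dif_neg hne, smul_smul]
      have hLne : L ≠ 0 := by
        rw [hL, norm_ne_zero_iff, sub_ne_zero]; exact fun h => hne h.symm
      rw [show v * (L/v) * L⁻¹ = 1 by field_simp]
      rw [one_smul]
      abel
  have hmid : ∀ t : ℝ, 0 ≤ t → t ≤ L/v → traj a v (fun _ => d) t ∈ gameRegion θ₀ := by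
    intro t ht htL
    rw [traj_const]
    rcases eq_or_ne a b with rfl | hne
    · have hL0' : L = 0 := by rw [hL]; simp
      have ht0 : t = 0 := le_antisymm (by rw [hL0'] at htL; simpa using htL) ht
      rw [ht0]
      simpa using ha
    · rw [hd, dif_neg hne, smul_smul]
      have hLne : (0:ℝ) < L := by
        rw [hL, norm_pos_iff, sub_ne_zero]; exact fun h => hne h.symm
      apply hseg
      rw [segment_eq_image']
      have hvt : v * t ≤ L := by
        calc v*t ≤ v*(L/v) := mul_le_mul_of_nonneg_left htL hv.le
          _ = L := by field_simp
      refine ⟨v * t * L⁻¹, ⟨by positivity, ?_⟩, by rfl⟩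
      rw [show (1:ℝ) = L * L⁻¹ from (mul_inv_cancel₀ hLne.ne').symm]
      exact mul_le_mul_of_nonneg_right hvt (by positivity)
  refine ⟨concatC (L/v) (fun _ => d) u₂, ?_, ?_, ?_⟩
  · exact isControl_concat (by positivity) (isControl_const hdnorm) h₂
  · intro t ht
    rcases le_total t (L/v) with h | h
    · rw [traj_concat_left (by positivity) a v ht h]
      exact hmid t ht h
    · rw [traj_concat_right (by positivity) (isControl_const hdnorm) h₂ a v h, hreach]
      exact hadm₂ (t - L/v) (by linarith)
  · intro t ht
    rw [traj_concat_right (by positivity) (isControl_const hdnorm) h₂ a v ht, hreach]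

/-- The outward tail control from a point of the region. -/
lemma tail_ctrl (hθ : θ₀ ∈ Set.Ioo 0 (Real.pi / 2)) {v : ℝ} (hv : 0 < v) {b : Pt}
    (hb : b ∈ gameRegion θ₀) :
    IsControl (fun _ : ℝ => outDir θ₀ b) ∧
      ∀ t : ℝ, 0 ≤ t → traj b v (fun _ => outDir θ₀ b) t ∈ gameRegion θ₀ := by
  refine ⟨isControl_const (norm_outDir b), fun t ht => ?_⟩
  rw [traj_const]
  exact ray_mem hθ hb (by positivity)

/-- Geodesic control: admissible from `a`, reaches `b` at time `dL θ₀ a b / v`. -/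
lemma geodesic_exists (hθ : θ₀ ∈ Set.Ioo 0 (Real.pi / 2)) {v : ℝ} (hv : 0 < v) {a b : Pt}
    (ha : a ∈ gameRegion θ₀) (hb : b ∈ gameRegion θ₀) :
    ∃ u : ℝ → Pt, Admissible θ₀ a v u ∧ traj a v u (dL θ₀ a b / v) = b := by
  obtain ⟨htail1, htail2⟩ := tail_ctrl hθ hv hb
  unfold dL
  split
  case isTrue hseg =>
    obtain ⟨u, hu1, hu2, hu3⟩ := seg_then hθ hv ha hseg htail1 htail2
    refine ⟨u, ⟨hu1, hu2⟩, ?_⟩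
    rw [norm_sub_rev]
    rw [hu3 (‖b - a‖/v) (le_refl _), sub_self, traj_zero]
  case isFalse hseg =>
    -- two-segment geodesic through the origin
    obtain ⟨u', hu'1, hu'2, hu'3⟩ := seg_then hθ hv (zero_mem_region hθ)
      (segment_zero_mem hb) htail1 htail2
    obtain ⟨u, hu1, hu2, hu3⟩ := seg_then hθ hv ha (segment_to_zero_mem ha) hu'1 hu'2
    refine ⟨u, ⟨hu1, hu2⟩, ?_⟩
    have e1 : ‖(0:Pt) - a‖ = ‖a‖ := by rw [zero_sub, norm_neg]
    have e2 : ‖b - (0:Pt)‖ = ‖b‖ := by rw [sub_zero]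
    have h1 : ‖(0:Pt) - a‖/v ≤ (‖a‖ + ‖b‖)/v := by
      rw [e1]
      gcongr
      linarith [norm_nonneg b]
    rw [hu3 _ h1]
    have h2 : (‖a‖ + ‖b‖)/v - ‖(0:Pt) - a‖/v = ‖b - (0:Pt)‖/v := by
      rw [e1, e2]; ring
    rw [h2, hu'3 _ (le_refl _), sub_self, traj_zero]

/-- Wait control: stays in the region, returns to `x` at time `2h`. -/
lemma wait_ctrl (hθ : θ₀ ∈ Set.Ioo 0 (Real.pi / 2)) {v : ℝ} (hv : 0 < v) {x : Pt}
    (hx : x ∈ gameRegion θ₀) {h : ℝ} (hh : 0 ≤ h) :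
    ∃ u : ℝ → Pt, IsControl u ∧ (∀ t : ℝ, 0 ≤ t → traj x v u t ∈ gameRegion θ₀) ∧
      traj x v u (2*h) = x := by
  set w := outDir θ₀ x with hw
  have hwn : ‖w‖ = 1 := norm_outDir x
  have hwn' : ‖-w‖ = 1 := by rw [norm_neg]; exact hwn
  set u₃ : ℝ → Pt := fun _ => w with hu₃
  set u₂ : ℝ → Pt := concatC h (fun _ => -w) u₃ with hu₂
  set u : ℝ → Pt := concatC h (fun _ => w) u₂ with hu
  have hc₃ : IsControl u₃ := isControl_const hwn
  have hc₂ : IsControl u₂ := isControl_concat hh (isControl_const hwn') hc₃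
  have hc : IsControl u := isControl_concat hh (isControl_const hwn) hc₂
  have hray : ∀ s : ℝ, 0 ≤ s → x + s • w ∈ gameRegion θ₀ := by
    intro s hs
    exact ray_mem hθ hx hs
  have htop : traj x v (fun _ => w) h = x + (v*h) • w := traj_const x v w h
  refine ⟨u, hc, ?_, ?_⟩
  · intro t ht
    rcases le_total t h with h1 | h1
    · rw [hu, traj_concat_left hh x v ht h1, traj_const]
      exact hray (v*t) (by positivity)
    · rw [hu, traj_concat_right hh (isControl_const hwn) hc₂ x v h1, htop]
      rcases le_total (t - h) h with h2 | h2
      · rw [hu₂, traj_concat_left hh _ v (by linarith) h2, traj_const]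
        have e : x + (v*h) • w + (v*(t-h)) • (-w) = x + (v*h - v*(t-h)) • w := by
          rw [smul_neg, sub_smul]
          abel
        rw [e]
        apply hray
        have : v*(t-h) ≤ v*h := mul_le_mul_of_nonneg_left h2 hv.le
        linarith
      · rw [hu₂, traj_concat_right hh (isControl_const hwn') hc₃ _ v h2]
        rw [traj_const (x + (v*h) • w) v (-w) h]
        have e : x + (v*h) • w + (v*h) • (-w) = x := by
          rw [smul_neg]
          abel
        rw [e, hu₃, traj_const]
        apply hray
        have h3 : 0 ≤ t - h - h := by linarith
        positivity
  · have h1 : h ≤ 2*h := by linarith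
    rw [hu, traj_concat_right hh (isControl_const hwn) hc₂ x v h1, htop]
    have h2 : h ≤ 2*h - h := by linarith
    rw [hu₂, traj_concat_right hh (isControl_const hwn') hc₃ _ v h2]
    rw [traj_const (x + (v*h) • w) v (-w) h]
    have e : x + (v*h) • w + (v*h) • (-w) = x := by
      rw [smul_neg]; abel
    rw [e, hu₃, traj_const]
    rw [show 2*h - h - h = 0 by ring]
    simp

end Geo

/-- In the corner-obstacle game (`θ₀ ∈ (0, π/2)`, speed ratio `α > 1`, zero
capture radius, initial positions `x_p0 ≠ x_e0` in `X`), the evader's reachable region —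
the set of `x ∈ X` reachable by some admissible evader control before capture against every
admissible pursuer control — equals the evader's initial dominance region
`D(x_p0, x_e0) = {x ∈ X : d_L(x, x_p0) − α·d_L(x, x_e0) > 0}`. -/
theorem stmt15 (θ₀ α : ℝ) (hθ : θ₀ ∈ Set.Ioo 0 (Real.pi / 2)) (hα : 1 < α)
    (x_p0 x_e0 : Pt) (hxp : x_p0 ∈ gameRegion θ₀) (hxe : x_e0 ∈ gameRegion θ₀)
    (hne : x_p0 ≠ x_e0) :
    {x : Pt | x ∈ gameRegion θ₀ ∧ ∃ u_e : ℝ → Pt, Admissible θ₀ x_e0 1 u_e ∧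
        ∀ u_p : ℝ → Pt, Admissible θ₀ x_p0 α u_p →
          ∃ t : ℝ, 0 ≤ t ∧
            ENNReal.ofReal t < captureTime 0 (traj x_p0 α u_p) (traj x_e0 1 u_e) ∧
            traj x_e0 1 u_e t = x} =
      {x : Pt | x ∈ gameRegion θ₀ ∧ 0 < dL θ₀ x x_p0 - α * dL θ₀ x x_e0} := by
  have hα0 : (0:ℝ) < α := by linarith
  ext x
  simp only [Set.mem_setOf_eq]
  constructor
  · -- reachable ⊆ dominance
    rintro ⟨hxreg, u_e, hue, hforall⟩
    refine ⟨hxreg, ?_⟩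
    by_contra hcon
    push_neg at hcon
    -- hcon : dL θ₀ x x_p0 - α * dL θ₀ x x_e0 ≤ 0
    set xe := traj x_e0 1 u_e with hxedef
    set H := {t : ℝ | 0 ≤ t ∧ xe t = x} with hHdef
    rcases Set.eq_empty_or_nonempty H with hH | hH
    · -- evader never reaches x : any admissible pursuer control gives a contradiction
      obtain ⟨u_p, hup, -⟩ := geodesic_exists hθ hα0 hxp hxp
      obtain ⟨t, ht0, -, hxet⟩ := hforall u_p hup
      have : t ∈ H := ⟨ht0, hxet⟩
      rw [hH] at this
      exact this
    · have hHclosed : IsClosed H := by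
        have hcont : ContinuousOn xe (Set.Ici 0) := traj_continuousOn hue.1 x_e0 zero_le_one
        have : H = Set.Ici 0 ∩ xe ⁻¹' {x} := by
          ext t
          simp [hHdef]
        rw [this]
        exact hcont.preimage_isClosed_of_isClosed isClosed_Ici isClosed_singleton
      have hHbdd : BddBelow H := ⟨0, fun t ht => ht.1⟩
      set T0 := sInf H with hT0def
      have hT0mem : T0 ∈ H := hHclosed.csInf_mem hH hHbdd
      have hT00 : 0 ≤ T0 := hT0mem.1
      have hxeT0 : xe T0 = x := hT0mem.2
      -- evader path length bound : dL x_e0 x ≤ T0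
      have hebound : dL θ₀ x_e0 x ≤ 1 * T0 := by
        have := dL_le_path hθ (K := 1) zero_le_one hT00 (p := xe)
          (fun t ht => hue.2 t ht.1)
          (fun s t hs ht hst => by
            have := traj_lip hue.1 x_e0 (v := 1) zero_le_one hs.1 hst
            simpa using this)
        rw [hxedef] at this
        rw [traj_zero] at this
        rw [← hxedef] at this
        rw [hxeT0] at this
        exact this
      rw [one_mul] at hebound
      -- pursuer arrival time
      set T1 := dL θ₀ x_p0 x / α with hT1def
      have hT10 : 0 ≤ T1 := div_nonneg (dL_nonneg _ _) hα0.le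
      have hT1T0 : T1 ≤ T0 := by
        rw [hT1def, div_le_iff₀ hα0]
        have e1 : dL θ₀ x_p0 x = dL θ₀ x x_p0 := dL_symm _ _
        have e2 : dL θ₀ x x_e0 = dL θ₀ x_e0 x := dL_symm _ _
        nlinarith [dL_nonneg (θ₀ := θ₀) x x_e0]
      obtain ⟨u_g, hug, hugT1⟩ := geodesic_exists hθ hα0 hxp hxreg
      have hh : 0 ≤ (T0 - T1)/2 := by linarith
      obtain ⟨u_w, huw, huwreg, huwT⟩ := wait_ctrl hθ hα0 hxreg hh
      set u_p := concatC T1 u_g u_w with hupdef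
      have hupadm : Admissible θ₀ x_p0 α u_p := by
        constructor
        · exact isControl_concat hT10 hug.1 huw
        · intro t ht
          rcases le_total t T1 with h1 | h1
          · rw [hupdef, traj_concat_left hT10 x_p0 α ht h1]
            exact hug.2 t ht
          · rw [hupdef, traj_concat_right hT10 hug.1 huw x_p0 α h1]
            rw [show traj x_p0 α u_g T1 = x from hugT1]
            exact huwreg (t - T1) (by linarith)
      -- capture happens at time T0
      have hcap : traj x_p0 α u_p T0 = x := by
        rw [hupdef, traj_concat_right hT10 hug.1 huw x_p0 α hT1T0]
        rw [show traj x_p0 α u_g T1 = x from hugT1]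
        rw [show T0 - T1 = 2*((T0 - T1)/2) by ring]
        exact huwT
      have hT0S : T0 ∈ {t : ℝ | 0 ≤ t ∧ ‖traj x_p0 α u_p t - xe t‖ ≤ 0} := by
        refine ⟨hT00, ?_⟩
        rw [hcap, hxeT0, sub_self, norm_zero]
      have hctle : captureTime 0 (traj x_p0 α u_p) xe ≤ ENNReal.ofReal T0 := by
        exact iInf₂_le T0 hT0S
      obtain ⟨t, ht0, htlt, hxet⟩ := hforall u_p hupadm
      have htH : t ∈ H := ⟨ht0, hxet⟩
      have hT0t : T0 ≤ t := csInf_le hHbdd htH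
      have : ENNReal.ofReal t < ENNReal.ofReal t := by
        calc ENNReal.ofReal t < captureTime 0 (traj x_p0 α u_p) xe := htlt
          _ ≤ ENNReal.ofReal T0 := hctle
          _ ≤ ENNReal.ofReal t := ENNReal.ofReal_le_ofReal hT0t
      exact lt_irrefl _ this
  · -- dominance ⊆ reachable
    rintro ⟨hxreg, hdom⟩
    set T := dL θ₀ x x_e0 with hTdef
    have hT0 : 0 ≤ T := dL_nonneg _ _
    obtain ⟨u_e, hue, hueT⟩ := geodesic_exists hθ (v := 1) one_pos hxe hxreg
    have hxeT : traj x_e0 1 u_e T = x := by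
      rw [hTdef, dL_symm]
      rw [show dL θ₀ x_e0 x = dL θ₀ x_e0 x / 1 by rw [div_one]]
      exact hueT
    refine ⟨hxreg, u_e, hue, ?_⟩
    intro u_p hup
    set xe := traj x_e0 1 u_e with hxedef
    set xp := traj x_p0 α u_p with hxpdef
    set S := {t : ℝ | 0 ≤ t ∧ ‖xp t - xe t‖ ≤ 0} with hSdef
    -- every capture time is > T
    have hS : ∀ τ ∈ S, T < τ := by
      rintro τ ⟨hτ0, hτcap⟩
      have hτeq : xp τ = xe τ := by
        rw [← sub_eq_zero]
        exact norm_le_zero_iff.mp hτcap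
      by_contra hτT
      push_neg at hτT
      -- concatenated path from x_p0 to x of speed α and duration T
      set q : ℝ → Pt := fun t => if t ≤ τ then xp t else xe t with hqdef
      have hq0 : q 0 = x_p0 := by
        rw [hqdef]
        simp only [if_pos hτ0]
        rw [hxpdef, traj_zero]
      have hqT : q T = x := by
        rw [hqdef]
        by_cases hTτ : T ≤ τ
        · have heq : τ = T := le_antisymm hτT hTτ
          simp only [if_pos hTτ]
          rw [← heq, hτeq, heq]
          exact hxeT
        · simp only [if_neg hTτ]
          exact hxeT
      have hq_eval : ∀ t : ℝ, q t = if t ≤ τ then xp t else xe t := fun t => rfl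
      have hqreg : ∀ t ∈ Set.Icc (0:ℝ) T, q t ∈ gameRegion θ₀ := by
        intro t ht
        rw [hq_eval t]
        split
        · exact hup.2 t ht.1
        · exact hue.2 t ht.1
      have hqlip : ∀ s t : ℝ, s ∈ Set.Icc (0:ℝ) T → t ∈ Set.Icc (0:ℝ) T → s ≤ t →
          ‖q t - q s‖ ≤ α * (t - s) := by
        intro s t hs ht hst
        rw [hq_eval t, hq_eval s]
        by_cases h1 : t ≤ τ
        · rw [if_pos h1, if_pos (le_trans hst h1)]
          exact traj_lip hup.1 x_p0 hα0.le hs.1 hst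
        · push_neg at h1
          by_cases h2 : s ≤ τ
          · rw [if_pos h2, if_neg (not_le.mpr h1)]
            have key : xe t - xp s = (xe t - xe τ) + (xp τ - xp s) := by
              rw [hτeq]; abel
            rw [key]
            have b1 : ‖xe t - xe τ‖ ≤ 1 * (t - τ) :=
              traj_lip hue.1 x_e0 zero_le_one hτ0 h1.le
            have b2 : ‖xp τ - xp s‖ ≤ α * (τ - s) :=
              traj_lip hup.1 x_p0 hα0.le hs.1 h2
            calc ‖(xe t - xe τ) + (xp τ - xp s)‖ ≤ ‖xe t - xe τ‖ + ‖xp τ - xp s‖ :=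
                norm_add_le _ _
              _ ≤ 1 * (t - τ) + α * (τ - s) := add_le_add b1 b2
              _ ≤ α * (t - s) := by nlinarith
          · push_neg at h2
            rw [if_neg (not_le.mpr h1), if_neg (not_le.mpr h2)]
            calc ‖xe t - xe s‖ ≤ 1 * (t - s) :=
                traj_lip hue.1 x_e0 zero_le_one hs.1 hst
              _ ≤ α * (t - s) := by nlinarith
      have hfinal := dL_le_path hθ (K := α) hα0.le hT0 (p := q) hqreg hqlip
      rw [hq0, hqT] at hfinal
      -- contradiction with dominance
      have e1 : dL θ₀ x_p0 x = dL θ₀ x x_p0 := dL_symm _ _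
      linarith
    refine ⟨T, hT0, ?_, hxeT⟩
    rcases Set.eq_empty_or_nonempty S with hSe | hSne
    · have : captureTime 0 xp xe = ⊤ := by
        unfold captureTime
        rw [← hSdef, hSe]
        simp
      rw [this]
      exact ENNReal.ofReal_lt_top
    · have hSclosed : IsClosed S := by
        have hcp : ContinuousOn xp (Set.Ici 0) := traj_continuousOn hup.1 x_p0 hα0.le
        have hce : ContinuousOn xe (Set.Ici 0) := traj_continuousOn hue.1 x_e0 zero_le_one
        have hg : ContinuousOn (fun t => ‖xp t - xe t‖) (Set.Ici 0) :=
          (hcp.sub hce).norm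
        have : S = Set.Ici 0 ∩ (fun t => ‖xp t - xe t‖) ⁻¹' (Set.Iic 0) := by
          ext t
          simp [hSdef]
        rw [this]
        exact hg.preimage_isClosed_of_isClosed isClosed_Ici isClosed_Iic
      have hSbdd : BddBelow S := ⟨0, fun t ht => ht.1⟩
      set τ0 := sInf S with hτ0def
      have hτ0mem : τ0 ∈ S := hSclosed.csInf_mem hSne hSbdd
      have hTτ0 : T < τ0 := hS τ0 hτ0mem
      have hge : ENNReal.ofReal τ0 ≤ captureTime 0 xp xe := by
        apply le_iInf₂
        intro t ht
        exact ENNReal.ofReal_le_ofReal (csInf_le hSbdd ht)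
      calc ENNReal.ofReal T < ENNReal.ofReal τ0 :=
          (ENNReal.ofReal_lt_ofReal_iff_of_nonneg hT0).mpr hTτ0
        _ ≤ captureTime 0 xp xe := hge

end
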